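/- Let λ̄ > 0 and let λ : [0,1] → ℝ be continuous with sup |λ| ≤ λ̄. On the domain D = {(ξ,η) ∈ ℝ² : 0 ≤ η ≤ ξ and ξ + η ≤ 2}, the integral equation G(ξ,η) = −(1/4)∫_η^ξ λ(s/2) ds + (1/4)∫_η^ξ ∫₀^η λ((σ−s)/2) · G(σ,s) ds dσ has a unique continuous solution G : D → ℝ, and this solution satisfies |G(ξ,η)| ≤ λ̄·e^{λ̄(ξ+η)} for all (ξ,η) ∈ D; in particular |G(ξ,η)| ≤ λ̄·e^{2λ̄} on D. -/

import Mathlib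

/-- The image of the triangle `{0 ≤ y ≤ x ≤ 1}` under `ξ = x + y`, `η = x - y`. -/
def Dtri : Set (ℝ × ℝ) := {p | 0 ≤ p.2 ∧ p.2 ≤ p.1 ∧ p.1 + p.2 ≤ 2}

namespace KIE

noncomputable section

open MeasureTheory intervalIntegral Real Set

/-! ### clamp and retraction -/

def cl (x : ℝ) : ℝ := max 0 (min x 1)

lemma cl_eq {x : ℝ} (h0 : 0 ≤ x) (h1 : x ≤ 1) : cl x = x := by
  simp [cl, min_eq_left h1, max_eq_right, h0]

lemma continuous_cl : Continuous cl := by unfold cl; fun_prop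

lemma cl_mem (x : ℝ) : cl x ∈ Set.Icc (0:ℝ) 1 := by
  constructor
  · exact le_max_left _ _
  · simp [cl]

def rho (p : ℝ × ℝ) : ℝ × ℝ :=
  (max (max 0 (min p.2 1)) (min p.1 (2 - max 0 (min p.2 1))), max 0 (min p.2 1))

lemma rho_mem (p : ℝ × ℝ) : rho p ∈ Dtri := by
  set b := max 0 (min p.2 1) with hb
  have hb0 : 0 ≤ b := le_max_left _ _
  have hb1 : b ≤ 1 := by simp [hb]
  refine ⟨hb0, le_max_left _ _, ?_⟩
  simp only [rho, ← hb]
  rcases max_cases b (min p.1 (2 - b)) with ⟨h, _⟩ | ⟨h, _⟩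
  · rw [h]; linarith
  · rw [h]
    have : min p.1 (2 - b) ≤ 2 - b := min_le_right _ _
    linarith

lemma rho_eq {p : ℝ × ℝ} (hp : p ∈ Dtri) : rho p = p := by
  obtain ⟨h0, h1, h2⟩ := hp
  have hp2 : p.2 ≤ 1 := by linarith
  have hb : max 0 (min p.2 1) = p.2 := by rw [min_eq_left hp2, max_eq_right h0]
  simp only [rho, hb, min_eq_left (by linarith : p.1 ≤ 2 - p.2), max_eq_right h1]

lemma continuous_rho : Continuous rho := by unfold rho; fun_prop

/-! ### operators -/

def Iop (k : ℝ × ℝ → ℝ) (p : ℝ × ℝ) : ℝ :=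
  ∫ σ in p.2..p.1, ∫ s in (0:ℝ)..p.2, k (σ, s)

def Kk (lam : ℝ → ℝ) (g : ℝ × ℝ → ℝ) : ℝ × ℝ → ℝ :=
  fun q => lam ((q.1 - q.2) / 2) * g q

def Ffun (lam : ℝ → ℝ) (p : ℝ × ℝ) : ℝ :=
  -(1/4) * ∫ s in p.2..p.1, lam (s / 2)

def Phi (lam : ℝ → ℝ) (g : ℝ × ℝ → ℝ) (p : ℝ × ℝ) : ℝ :=
  Ffun lam p + (1/4) * Iop (Kk lam g) p

lemma continuous_Kk {lam : ℝ → ℝ} (hlam : Continuous lam) {g : ℝ × ℝ → ℝ}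
    (hg : Continuous g) : Continuous (Kk lam g) := by
  unfold Kk; fun_prop

lemma continuous_J {k : ℝ × ℝ → ℝ} (hk : Continuous k) (c : ℝ) :
    Continuous (fun σ => ∫ s in (0:ℝ)..c, k (σ, s)) := by
  apply intervalIntegral.continuous_parametric_intervalIntegral_of_continuous'
    (f := fun (σ : ℝ) s => k (σ, s))
  exact hk.comp (by fun_prop)

lemma continuous_Iop {k : ℝ × ℝ → ℝ} (hk : Continuous k) : Continuous (Iop k) := by
  have hinner : Continuous (fun x : (ℝ × ℝ) × ℝ => ∫ s in (0:ℝ)..x.1.2, k (x.2, s)) := by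
    apply intervalIntegral.continuous_parametric_intervalIntegral_of_continuous
      (f := fun (x : (ℝ × ℝ) × ℝ) s => k (x.2, s))
    · exact hk.comp (by fun_prop)
    · fun_prop
  have h1 : Continuous (fun p : ℝ × ℝ => ∫ σ in (0:ℝ)..p.1,
      ∫ s in (0:ℝ)..p.2, k (σ, s)) := by
    apply intervalIntegral.continuous_parametric_intervalIntegral_of_continuous
      (f := fun (p : ℝ × ℝ) σ => ∫ s in (0:ℝ)..p.2, k (σ, s))
    · exact hinner.comp (by fun_prop)
    · fun_prop
  have h2 : Continuous (fun p : ℝ × ℝ => ∫ σ in (0:ℝ)..p.2,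
      ∫ s in (0:ℝ)..p.2, k (σ, s)) := by
    apply intervalIntegral.continuous_parametric_intervalIntegral_of_continuous
      (f := fun (p : ℝ × ℝ) σ => ∫ s in (0:ℝ)..p.2, k (σ, s))
    · exact hinner.comp (by fun_prop)
    · fun_prop
  have key : ∀ p : ℝ × ℝ, Iop k p =
      (∫ σ in (0:ℝ)..p.1, ∫ s in (0:ℝ)..p.2, k (σ, s)) -
      (∫ σ in (0:ℝ)..p.2, ∫ s in (0:ℝ)..p.2, k (σ, s)) := by
    intro p
    rw [integral_interval_sub_left ((continuous_J hk p.2).intervalIntegrable _ _)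
      ((continuous_J hk p.2).intervalIntegrable _ _)]
    rfl
  have heq : Iop k = fun p => (∫ σ in (0:ℝ)..p.1, ∫ s in (0:ℝ)..p.2, k (σ, s)) -
      (∫ σ in (0:ℝ)..p.2, ∫ s in (0:ℝ)..p.2, k (σ, s)) := funext key
  rw [heq]
  exact h1.sub h2

lemma continuous_Ffun {lam : ℝ → ℝ} (hlam : Continuous lam) :
    Continuous (Ffun lam) := by
  have hi : ∀ a b : ℝ, IntervalIntegrable (fun s => lam (s / 2)) volume a b :=
    fun a b => (hlam.comp (by fun_prop)).intervalIntegrable _ _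
  have h1 : Continuous (fun x : ℝ => ∫ s in (0:ℝ)..x, lam (s / 2)) :=
    intervalIntegral.continuous_primitive (fun a b => hi a b) 0
  have key : Ffun lam = fun p =>
      -(1/4) * ((∫ s in (0:ℝ)..p.1, lam (s / 2)) - ∫ s in (0:ℝ)..p.2, lam (s / 2)) := by
    funext p
    rw [integral_interval_sub_left (hi _ _) (hi _ _)]
    rfl
  rw [key]
  exact (continuous_const.mul ((h1.comp continuous_fst).sub (h1.comp continuous_snd)))

lemma continuous_Phi {lam : ℝ → ℝ} (hlam : Continuous lam) {g : ℝ × ℝ → ℝ}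
    (hg : Continuous g) : Continuous (Phi lam g) :=
  (continuous_Ffun hlam).add (continuous_const.mul (continuous_Iop (continuous_Kk hlam hg)))

/-! ### estimates -/

lemma abs_Iop_le {k : ℝ × ℝ → ℝ} {φ : ℝ → ℝ} (hφc : Continuous φ)
    (hφm : MonotoneOn φ (Set.Ici 0)) (hφ0 : ∀ u, 0 ≤ u → 0 ≤ φ u)
    {p : ℝ × ℝ} (hp : p ∈ Dtri) (hbnd : ∀ q ∈ Dtri, |k q| ≤ φ (q.1 + q.2)) :
    |Iop k p| ≤ ∫ u in (0:ℝ)..(p.1 + p.2), φ u := by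
  obtain ⟨h0, h12, hs2⟩ := hp
  set η := p.2 with hη
  set ξ := p.1 with hξ
  have hη1 : η ≤ 1 := by linarith
  have step1 : ∀ σ ∈ Set.Icc η ξ, |∫ s in (0:ℝ)..η, k (σ, s)| ≤ φ (σ + η) := by
    intro σ hσ
    have h1 : ‖∫ s in (0:ℝ)..η, k (σ, s)‖ ≤ φ (σ + η) * |η - 0| := by
      apply intervalIntegral.norm_integral_le_of_norm_le_const
      intro s hs
      rw [Set.uIoc_of_le h0] at hs
      have hq : (σ, s) ∈ Dtri :=
        ⟨hs.1.le, hs.2.trans hσ.1, by simp only; linarith [hσ.2, hs.2]⟩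
      rw [Real.norm_eq_abs]
      calc |k (σ, s)| ≤ φ (σ + s) := hbnd _ hq
        _ ≤ φ (σ + η) := by
            apply hφm (by simp; linarith [hσ.1, hs.1.le]) (by simp; linarith [hσ.1])
            linarith [hs.2]
    rw [Real.norm_eq_abs, sub_zero, abs_of_nonneg h0] at h1
    calc |∫ s in (0:ℝ)..η, k (σ, s)| ≤ φ (σ + η) * η := h1
      _ ≤ φ (σ + η) * 1 :=
          mul_le_mul_of_nonneg_left hη1 (hφ0 _ (by linarith [hσ.1]))
      _ = φ (σ + η) := mul_one _
  have hint : IntervalIntegrable (fun σ => φ (σ + η)) volume η ξ :=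
    (hφc.comp (by fun_prop)).intervalIntegrable _ _
  have step2 : |Iop k p| ≤ ∫ σ in η..ξ, φ (σ + η) := by
    have h2 : ‖∫ σ in η..ξ, ∫ s in (0:ℝ)..η, k (σ, s)‖ ≤ |∫ σ in η..ξ, φ (σ + η)| := by
      apply intervalIntegral.norm_integral_le_abs_of_norm_le ?_ hint
      apply MeasureTheory.ae_restrict_of_forall_mem measurableSet_uIoc
      intro σ hσ
      rw [Set.uIoc_of_le h12] at hσ
      rw [Real.norm_eq_abs]
      exact step1 σ ⟨hσ.1.le, hσ.2⟩
    rw [abs_of_nonneg (intervalIntegral.integral_nonneg h12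
      (fun u hu => hφ0 _ (by linarith [hu.1])))] at h2
    exact h2
  have step3 : (∫ σ in η..ξ, φ (σ + η)) = ∫ u in (η + η)..(ξ + η), φ u :=
    intervalIntegral.integral_comp_add_right φ η
  have hint2 : ∀ a b : ℝ, IntervalIntegrable φ volume a b :=
    fun a b => hφc.intervalIntegrable _ _
  have step4 : (∫ u in (η + η)..(ξ + η), φ u) ≤ ∫ u in (0:ℝ)..(ξ + η), φ u := by
    have hadj : (∫ u in (0:ℝ)..(η + η), φ u) + (∫ u in (η + η)..(ξ + η), φ u) =
        ∫ u in (0:ℝ)..(ξ + η), φ u :=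
      intervalIntegral.integral_add_adjacent_intervals (hint2 _ _) (hint2 _ _)
    have hnn : 0 ≤ ∫ u in (0:ℝ)..(η + η), φ u :=
      intervalIntegral.integral_nonneg (by linarith) (fun u hu => hφ0 _ hu.1)
    linarith
  calc |Iop k p| ≤ ∫ σ in η..ξ, φ (σ + η) := step2
    _ = ∫ u in (η + η)..(ξ + η), φ u := step3
    _ ≤ ∫ u in (0:ℝ)..(ξ + η), φ u := step4

lemma integral_poly (c t : ℝ) (n : ℕ) (ht : 0 ≤ t) :
    ∫ u in (0:ℝ)..t, c * |u| ^ n = c * t ^ (n + 1) / (n + 1) := by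
  have h : (∫ u in (0:ℝ)..t, c * |u| ^ n) = ∫ u in (0:ℝ)..t, c * u ^ n := by
    apply intervalIntegral.integral_congr
    intro u hu
    rw [Set.uIcc_of_le ht] at hu
    simp only [abs_of_nonneg hu.1]
  rw [h, intervalIntegral.integral_const_mul, integral_pow]
  ring

lemma integral_expc (b t : ℝ) :
    ∫ u in (0:ℝ)..t, b * Real.exp (b * u) = Real.exp (b * t) - 1 := by
  have hderiv : ∀ u ∈ Set.uIcc (0:ℝ) t,
      HasDerivAt (fun u => Real.exp (b * u)) (b * Real.exp (b * u)) u := by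
    intro u _
    have h := ((hasDerivAt_id u).const_mul b).exp
    simpa [mul_comm] using h
  have hint : IntervalIntegrable (fun u => b * Real.exp (b * u)) volume 0 t := by
    apply Continuous.intervalIntegrable; fun_prop
  rw [intervalIntegral.integral_eq_sub_of_hasDerivAt hderiv hint]
  simp

lemma monoOn_abs_pow (c : ℝ) (hc : 0 ≤ c) (n : ℕ) :
    MonotoneOn (fun w => c * |w| ^ n) (Set.Ici 0) := by
  intro a ha b hb hab
  simp only
  rw [abs_of_nonneg ha, abs_of_nonneg hb]
  gcongr

lemma Iop_sub {lam : ℝ → ℝ} (hlamc : Continuous lam) {u v : ℝ × ℝ → ℝ}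
    (hu : Continuous u) (hv : Continuous v) (p : ℝ × ℝ) :
    Iop (Kk lam u) p - Iop (Kk lam v) p = Iop (Kk lam (fun q => u q - v q)) p := by
  have hKu := continuous_Kk hlamc hu
  have hKv := continuous_Kk hlamc hv
  unfold Iop
  rw [← intervalIntegral.integral_sub ((continuous_J hKu p.2).intervalIntegrable _ _)
    ((continuous_J hKv p.2).intervalIntegrable _ _)]
  apply intervalIntegral.integral_congr
  intro σ _
  simp only
  have hs1 : Continuous fun s : ℝ => Kk lam u (σ, s) := hKu.comp (by fun_prop)
  have hs2 : Continuous fun s : ℝ => Kk lam v (σ, s) := hKv.comp (by fun_prop)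
  rw [← intervalIntegral.integral_sub (hs1.intervalIntegrable _ _)
    (hs2.intervalIntegrable _ _)]
  apply intervalIntegral.integral_congr
  intro s _
  simp only [Kk]
  ring

lemma abs_Ffun_le {lb : ℝ} (hlb : 0 ≤ lb) {lam : ℝ → ℝ} (hlamb : ∀ x, |lam x| ≤ lb)
    {p : ℝ × ℝ} (hp : p ∈ Dtri) : |Ffun lam p| ≤ lb / 2 := by
  obtain ⟨h0, h12, h2⟩ := hp
  have h : ‖∫ s in p.2..p.1, lam (s / 2)‖ ≤ lb * |p.1 - p.2| :=
    intervalIntegral.norm_integral_le_of_norm_le_const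
      (fun s _ => by rw [Real.norm_eq_abs]; exact hlamb _)
  rw [Real.norm_eq_abs] at h
  have habs : |p.1 - p.2| ≤ 2 := by rw [abs_of_nonneg (by linarith)]; linarith
  unfold Ffun
  rw [abs_mul]
  have : |(-(1/4) : ℝ)| = 1/4 := by norm_num
  rw [this]
  nlinarith [abs_nonneg (∫ s in p.2..p.1, lam (s / 2))]

/-- the master contraction-type estimate -/
lemma key_est {lb : ℝ} (hlb : 0 < lb) {lam : ℝ → ℝ} (hlamc : Continuous lam)
    (hlamb : ∀ x, |lam x| ≤ lb) {u v : ℝ × ℝ → ℝ} (hu : Continuous u) (hv : Continuous v)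
    {C : ℝ} (hC : 0 ≤ C) (n : ℕ)
    (hd : ∀ q ∈ Dtri, |u q - v q| ≤ C * (lb/4)^n * (q.1 + q.2)^n / n.factorial)
    {p : ℝ × ℝ} (hp : p ∈ Dtri) :
    |Phi lam u p - Phi lam v p| ≤
      C * (lb/4)^(n+1) * (p.1 + p.2)^(n+1) / (n+1).factorial := by
  have hdiff : Phi lam u p - Phi lam v p = (1/4) * Iop (Kk lam (fun q => u q - v q)) p := by
    unfold Phi
    rw [← Iop_sub hlamc hu hv p]
    ring
  set cc := lb * (C * (lb/4)^n / n.factorial) with hcc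
  have hccnn : 0 ≤ cc := by positivity
  have hIle : |Iop (Kk lam (fun q => u q - v q)) p| ≤
      ∫ w in (0:ℝ)..(p.1 + p.2), cc * |w| ^ n := by
    apply abs_Iop_le (by fun_prop) (monoOn_abs_pow cc hccnn n)
      (fun w _ => by positivity) hp
    intro q hq
    have hq1 : 0 ≤ q.1 + q.2 := by
      obtain ⟨a, b, c⟩ := hq; linarith
    calc |Kk lam (fun q => u q - v q) q| = |lam ((q.1 - q.2)/2)| * |u q - v q| := abs_mul _ _
      _ ≤ lb * (C * (lb/4)^n * (q.1 + q.2)^n / n.factorial) := by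
          apply mul_le_mul (hlamb _) (hd q hq) (abs_nonneg _) hlb.le
      _ = cc * |q.1 + q.2| ^ n := by
          rw [abs_of_nonneg hq1, hcc]; ring
  have ht0 : 0 ≤ p.1 + p.2 := by obtain ⟨a, b, c⟩ := hp; linarith
  have hint : (∫ w in (0:ℝ)..(p.1 + p.2), cc * |w| ^ n) =
      cc * (p.1 + p.2) ^ (n+1) / (n+1) := integral_poly cc _ n ht0
  have hfact : ((n+1).factorial : ℝ) = (n+1) * n.factorial := by
    rw [Nat.factorial_succ]; push_cast; ring
  have hfpos : (0:ℝ) < n.factorial := by positivity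
  rw [hdiff, abs_mul]
  have h14 : |(1/4 : ℝ)| = 1/4 := by norm_num
  rw [h14]
  calc (1/4) * |Iop (Kk lam (fun q => u q - v q)) p| ≤
      (1/4) * (cc * (p.1 + p.2) ^ (n+1) / (n+1)) := by
        rw [← hint]; linarith [hIle]
    _ = C * (lb/4)^(n+1) * (p.1 + p.2)^(n+1) / (n+1).factorial := by
        rw [hcc, hfact]
        field_simp
        ring

lemma pt_mem {p : ℝ × ℝ} (hp : p ∈ Dtri) {σ s : ℝ} (hσ : σ ∈ Set.uIcc p.2 p.1)
    (hs : s ∈ Set.uIcc 0 p.2) :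
    (σ, s) ∈ Dtri ∧ 0 ≤ (σ - s) / 2 ∧ (σ - s) / 2 ≤ 1 := by
  obtain ⟨h0, h12, h2⟩ := hp
  rw [Set.uIcc_of_le h12] at hσ
  rw [Set.uIcc_of_le h0] at hs
  refine ⟨⟨hs.1, hs.2.trans hσ.1, by simp only; linarith [hσ.2, hs.2]⟩,
    by linarith [hσ.1, hs.2], by linarith [hσ.2, hs.1]⟩

lemma double_congr {lam : ℝ → ℝ} {g1 g2 : ℝ × ℝ → ℝ} {p : ℝ × ℝ} (hp : p ∈ Dtri)
    (h : ∀ q ∈ Dtri, g1 q = g2 q) :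
    (∫ σ in p.2..p.1, ∫ s in (0:ℝ)..p.2, lam ((σ - s) / 2) * g1 (σ, s)) =
    ∫ σ in p.2..p.1, ∫ s in (0:ℝ)..p.2, lam ((σ - s) / 2) * g2 (σ, s) := by
  apply intervalIntegral.integral_congr
  intro σ hσ
  simp only
  apply intervalIntegral.integral_congr
  intro s hs
  simp only
  rw [h _ (pt_mem hp hσ hs).1]

lemma Phi_eq_form {lam lamC : ℝ → ℝ} (hC : ∀ x ∈ Set.Icc (0:ℝ) 1, lamC x = lam x)
    (g : ℝ × ℝ → ℝ) {p : ℝ × ℝ} (hp : p ∈ Dtri) :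
    Phi lamC g p = -(1/4) * (∫ s in p.2..p.1, lam (s / 2)) +
      (1/4) * ∫ σ in p.2..p.1, ∫ s in (0:ℝ)..p.2, lam ((σ - s) / 2) * g (σ, s) := by
  have h12 := hp.2.1
  have h0 := hp.1
  have h2 := hp.2.2
  unfold Phi Ffun Iop Kk
  congr 1
  · congr 1
    apply intervalIntegral.integral_congr
    intro s hs
    rw [Set.uIcc_of_le h12] at hs
    simp only
    exact hC _ ⟨by linarith [hs.1], by linarith [hs.2]⟩
  · congr 1
    apply intervalIntegral.integral_congr
    intro σ hσ
    simp only
    apply intervalIntegral.integral_congr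
    intro s hs
    simp only
    rw [hC _ ⟨(pt_mem hp hσ hs).2.1, (pt_mem hp hσ hs).2.2⟩]

lemma isCompact_Dtri : IsCompact Dtri := by
  have hclosed : IsClosed Dtri := by
    have heq : Dtri = {p : ℝ × ℝ | 0 ≤ p.2} ∩ {p | p.2 ≤ p.1} ∩ {p | p.1 + p.2 ≤ 2} := by
      ext p; simp only [Dtri, Set.mem_setOf_eq, Set.mem_inter_iff]; tauto
    rw [heq]
    exact ((isClosed_le continuous_const continuous_snd).inter
      (isClosed_le continuous_snd continuous_fst)).inter
      (isClosed_le (by fun_prop) continuous_const)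
  have hsub : Dtri ⊆ Set.Icc ((0:ℝ), (0:ℝ)) ((2:ℝ), (2:ℝ)) := by
    rintro p ⟨a, b, c⟩
    rw [Set.mem_Icc]
    constructor <;> rw [Prod.le_def] <;> constructor <;> simp only <;> linarith
  exact isCompact_Icc.of_isClosed_subset hclosed hsub


end

end KIE

/-- Existence, uniqueness and bound for the continuous solution of the
integral-equation form of the backstepping gain-kernel PDE:
`G(ξ,η) = -(1/4)∫_η^ξ λ(s/2) ds + (1/4)∫_η^ξ ∫₀^η λ((σ-s)/2) G(σ,s) ds dσ`,
with `|G(ξ,η)| ≤ λ̄ e^{λ̄(ξ+η)} ≤ λ̄ e^{2λ̄}` on `D`. -/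
theorem kernel_integral_equation (lambdaBar : ℝ) (hlam : 0 < lambdaBar)
    (lam : ℝ → ℝ) (hlam_cont : ContinuousOn lam (Set.Icc 0 1))
    (hlam_bnd : ∀ x ∈ Set.Icc (0:ℝ) 1, |lam x| ≤ lambdaBar) :
    ∃ G : ℝ × ℝ → ℝ,
      ContinuousOn G Dtri ∧
      (∀ p ∈ Dtri,
        G p = -(1 / 4) * (∫ s in p.2..p.1, lam (s / 2)) +
          (1 / 4) * ∫ σ in p.2..p.1, ∫ s in (0:ℝ)..p.2, lam ((σ - s) / 2) * G (σ, s)) ∧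
      (∀ p ∈ Dtri,
        |G p| ≤ lambdaBar * Real.exp (lambdaBar * (p.1 + p.2)) ∧
        |G p| ≤ lambdaBar * Real.exp (2 * lambdaBar)) ∧
      (∀ G' : ℝ × ℝ → ℝ, ContinuousOn G' Dtri →
        (∀ p ∈ Dtri,
          G' p = -(1 / 4) * (∫ s in p.2..p.1, lam (s / 2)) +
            (1 / 4) * ∫ σ in p.2..p.1, ∫ s in (0:ℝ)..p.2, lam ((σ - s) / 2) * G' (σ, s)) →
        Set.EqOn G G' Dtri) := by
  classical
  set lb := lambdaBar with hlbdef
  have hlb0 : (0:ℝ) ≤ lb := hlam.le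
  set lamC : ℝ → ℝ := fun x => lam (KIE.cl x) with hlamCdef
  have hCeq : ∀ x ∈ Set.Icc (0:ℝ) 1, lamC x = lam x := by
    intro x hx
    simp only [hlamCdef, KIE.cl_eq hx.1 hx.2]
  have hlamCc : Continuous lamC := hlam_cont.comp_continuous KIE.continuous_cl KIE.cl_mem
  have hlamCb : ∀ x, |lamC x| ≤ lb := fun x => hlam_bnd _ (KIE.cl_mem x)
  -- the Picard operator on bounded continuous functions
  obtain ⟨T, hT⟩ : ∃ T : (BoundedContinuousFunction (ℝ × ℝ) ℝ) → (BoundedContinuousFunction (ℝ × ℝ) ℝ),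
      ∀ g p, T g p = KIE.Phi lamC g (KIE.rho p) := by
    have hbnd : ∀ (g : BoundedContinuousFunction (ℝ × ℝ) ℝ) (p : ℝ × ℝ),
        ‖KIE.Phi lamC g (KIE.rho p)‖ ≤ lb/2 + lb * ‖g‖ / 2 := by
      intro g p
      have hq := KIE.rho_mem p
      set q := KIE.rho p
      have h1 : |KIE.Ffun lamC q| ≤ lb/2 := KIE.abs_Ffun_le hlb0 hlamCb hq
      have hgnn : (0:ℝ) ≤ ‖g‖ := norm_nonneg g
      have h2 : |KIE.Iop (KIE.Kk lamC g) q| ≤ 2 * (lb * ‖g‖) := by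
        have hIle : |KIE.Iop (KIE.Kk lamC g) q| ≤
            ∫ _u in (0:ℝ)..(q.1 + q.2), lb * ‖g‖ := by
          apply KIE.abs_Iop_le continuous_const (monotoneOn_const)
            (fun u _ => by positivity) hq
          intro r _
          calc |KIE.Kk lamC g r| = |lamC ((r.1 - r.2)/2)| * |g r| := abs_mul _ _
            _ ≤ lb * ‖g‖ := by
                apply mul_le_mul (hlamCb _) ?_ (abs_nonneg _) hlb0
                rw [← Real.norm_eq_abs]
                exact g.norm_coe_le_norm r
        have hval : (∫ _u in (0:ℝ)..(q.1 + q.2), lb * ‖g‖) = (q.1 + q.2) * (lb * ‖g‖) := by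
          rw [intervalIntegral.integral_const, smul_eq_mul, sub_zero]
        have ht2 : q.1 + q.2 ≤ 2 := hq.2.2
        have ht0 : 0 ≤ q.1 + q.2 := by have := hq.1; have := hq.2.1; linarith
        rw [hval] at hIle
        exact hIle.trans (mul_le_mul_of_nonneg_right ht2 (by positivity))
      rw [Real.norm_eq_abs]
      calc |KIE.Phi lamC g q| ≤ |KIE.Ffun lamC q| + |(1/4) * KIE.Iop (KIE.Kk lamC g) q| := by
            unfold KIE.Phi; exact abs_add_le _ _
        _ ≤ lb/2 + (1/4) * (2 * (lb * ‖g‖)) := by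
            rw [abs_mul]
            have : |(1/4 : ℝ)| = 1/4 := by norm_num
            rw [this]
            have h4 : (0:ℝ) ≤ 1/4 := by norm_num
            nlinarith
        _ = lb/2 + lb * ‖g‖ / 2 := by ring
    refine ⟨fun g => BoundedContinuousFunction.ofNormedAddCommGroup
      (fun p => KIE.Phi lamC g (KIE.rho p))
      ((KIE.continuous_Phi hlamCc g.continuous).comp KIE.continuous_rho)
      (lb/2 + lb * ‖g‖ / 2) (hbnd g), fun g p => rfl⟩
  have hTrho : ∀ g p, T g p = T g (KIE.rho p) := by
    intro g p
    rw [hT, hT, KIE.rho_eq (KIE.rho_mem p)]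
  have hTq : ∀ (g) {q}, q ∈ Dtri → T g q = KIE.Phi lamC g q := by
    intro g q hq
    rw [hT, KIE.rho_eq hq]
  -- iterated contraction estimate
  have claim : ∀ (g h : BoundedContinuousFunction (ℝ × ℝ) ℝ) (m : ℕ), ∀ q ∈ Dtri,
      |(T^[m] g) q - (T^[m] h) q| ≤
        dist g h * (lb/4)^m * (q.1 + q.2)^m / m.factorial := by
    intro g h m
    induction m with
    | zero =>
      intro q _
      simp only [Function.iterate_zero, id_eq, pow_zero, Nat.factorial_zero, Nat.cast_one,
        mul_one, div_one]
      rw [← Real.dist_eq]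
      exact BoundedContinuousFunction.dist_coe_le_dist q
    | succ m ih =>
      intro q hq
      rw [Function.iterate_succ_apply', Function.iterate_succ_apply', hTq _ hq, hTq _ hq]
      exact KIE.key_est hlam hlamCc hlamCb (T^[m] g).continuous (T^[m] h).continuous
        dist_nonneg m ih hq
  -- choose an iterate that contracts
  obtain ⟨m, hm1, hm2⟩ : ∃ m : ℕ, 1 ≤ m ∧ (lb/2)^m / m.factorial ≤ 1/2 := by
    have htend0 : Filter.Tendsto (fun m : ℕ => (lb/2)^m / m.factorial)
        Filter.atTop (nhds 0) := FloorSemiring.tendsto_pow_div_factorial_atTop (lb/2)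
    have h1 : ∀ᶠ m : ℕ in Filter.atTop, (lb/2)^m / m.factorial < 1/2 :=
      htend0.eventually (gt_mem_nhds (by norm_num : (0:ℝ) < 1/2))
    obtain ⟨m, hm⟩ := (h1.and (Filter.eventually_ge_atTop 1)).exists
    exact ⟨m, hm.2, hm.1.le⟩
  have hcontr : ContractingWith (1/2 : NNReal) (T^[m]) := by
    constructor
    · rw [← NNReal.coe_lt_coe]; norm_num
    · apply LipschitzWith.of_dist_le_mul
      intro g h
      have hcoe : ((1/2 : NNReal) : ℝ) = 1/2 := by norm_num
      rw [hcoe]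
      apply (BoundedContinuousFunction.dist_le (by positivity)).2
      intro p
      obtain ⟨m', rfl⟩ : ∃ m', m = m' + 1 := ⟨m - 1, by omega⟩
      have e1 : ∀ x : BoundedContinuousFunction (ℝ × ℝ) ℝ,
          (T^[m'+1] x) p = (T^[m'+1] x) (KIE.rho p) := by
        intro x
        rw [Function.iterate_succ_apply']
        exact hTrho _ p
      rw [Real.dist_eq, e1 g, e1 h]
      have hq := KIE.rho_mem p
      have hc := claim g h (m'+1) _ hq
      set q := KIE.rho p
      have ht0 : 0 ≤ q.1 + q.2 := by have := hq.1; have := hq.2.1; linarith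
      have ht2 : q.1 + q.2 ≤ 2 := hq.2.2
      have hdnn : (0:ℝ) ≤ dist g h := dist_nonneg
      calc |(T^[m'+1] g) q - (T^[m'+1] h) q| ≤
          dist g h * (lb/4)^(m'+1) * (q.1 + q.2)^(m'+1) / (m'+1).factorial := hc
        _ ≤ dist g h * (lb/4)^(m'+1) * 2^(m'+1) / (m'+1).factorial := by
            gcongr
        _ = dist g h * ((lb/2)^(m'+1) / (m'+1).factorial) := by
            have hpow : (lb/4)^(m'+1) * 2^(m'+1) = (lb/2)^(m'+1) := by
              rw [← mul_pow]
              congr 1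
              ring
            rw [mul_assoc, hpow, mul_div_assoc]
        _ ≤ dist g h * (1/2) := by
            apply mul_le_mul_of_nonneg_left hm2 hdnn
        _ = 1/2 * dist g h := by ring
  set G0 : BoundedContinuousFunction (ℝ × ℝ) ℝ := ContractingWith.fixedPoint (T^[m]) hcontr with hG0def
  have hfix : T G0 = G0 := hcontr.isFixedPt_fixedPoint_iterate
  have heq : ∀ p ∈ Dtri, G0 p = -(1 / 4) * (∫ s in p.2..p.1, lam (s / 2)) +
      (1 / 4) * ∫ σ in p.2..p.1, ∫ s in (0:ℝ)..p.2, lam ((σ - s) / 2) * G0 (σ, s) := by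
    intro p hp
    conv_lhs => rw [← hfix]
    rw [hTq _ hp, KIE.Phi_eq_form hCeq _ hp]
  refine ⟨G0, G0.continuous.continuousOn, heq, ?_, ?_⟩
  · -- bounds
    intro p hp
    have hmain : |G0 p| ≤ lb * Real.exp (lb * (p.1 + p.2)) := by
      set nG := ‖G0‖ with hnGdef
      have hnGnn : (0:ℝ) ≤ nG := norm_nonneg G0
      have claimB : ∀ (k : ℕ), ∀ q ∈ Dtri, |G0 q| ≤
          lb * Real.exp (lb * (q.1 + q.2)) + nG * (lb/4)^k * (q.1 + q.2)^k / k.factorial := by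
        intro k
        induction k with
        | zero =>
          intro q hq
          simp only [pow_zero, Nat.factorial_zero, Nat.cast_one, mul_one, div_one]
          have h1 : |G0 q| ≤ nG := by
            rw [← Real.norm_eq_abs]; exact G0.norm_coe_le_norm q
          have h2 : (0:ℝ) ≤ lb * Real.exp (lb * (q.1 + q.2)) := by positivity
          linarith
        | succ k ih =>
          intro q hq
          have hGq : G0 q = KIE.Phi lamC G0 q := by
            conv_lhs => rw [← hfix]
            rw [hTq _ hq]
          have ht0 : 0 ≤ q.1 + q.2 := by have := hq.1; have := hq.2.1; linarith
          set cc := nG * (lb/4)^k / k.factorial with hcc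
          have hccnn : (0:ℝ) ≤ cc := by positivity
          have hF : |KIE.Ffun lamC q| ≤ lb/2 := KIE.abs_Ffun_le hlb0 hlamCb hq
          have hm1 : Monotone (fun w => lb * (lb * Real.exp (lb * w))) := by
            intro a b hab
            have : Real.exp (lb * a) ≤ Real.exp (lb * b) :=
              Real.exp_le_exp.2 (mul_le_mul_of_nonneg_left hab hlb0)
            simp only
            exact mul_le_mul_of_nonneg_left (mul_le_mul_of_nonneg_left this hlb0) hlb0
          have hφm : MonotoneOn
              (fun w => lb * (lb * Real.exp (lb * w)) + (lb * cc) * |w|^k)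
              (Set.Ici 0) :=
            (hm1.monotoneOn _).add (KIE.monoOn_abs_pow (lb * cc) (by positivity) k)
          have hI : |KIE.Iop (KIE.Kk lamC G0) q| ≤
              ∫ w in (0:ℝ)..(q.1 + q.2),
                (lb * (lb * Real.exp (lb * w)) + (lb * cc) * |w|^k) := by
            apply KIE.abs_Iop_le (by fun_prop) hφm (fun u _ => by positivity) hq
            intro r hr
            have hr0 : 0 ≤ r.1 + r.2 := by have := hr.1; have := hr.2.1; linarith
            have hihr := ih r hr
            have hrw : cc * (r.1 + r.2)^k =
                nG * (lb/4)^k * (r.1 + r.2)^k / k.factorial := by rw [hcc]; ring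
            calc |KIE.Kk lamC G0 r| = |lamC ((r.1 - r.2)/2)| * |G0 r| := abs_mul _ _
              _ ≤ lb * (lb * Real.exp (lb * (r.1 + r.2)) + cc * (r.1 + r.2)^k) := by
                  apply mul_le_mul (hlamCb _) (by linarith) (abs_nonneg _) hlb0
              _ = lb * (lb * Real.exp (lb * (r.1 + r.2))) + (lb * cc) * |r.1 + r.2|^k := by
                  rw [abs_of_nonneg hr0]; ring
          have hIval : (∫ w in (0:ℝ)..(q.1 + q.2),
              (lb * (lb * Real.exp (lb * w)) + (lb * cc) * |w|^k)) =
              lb * (Real.exp (lb * (q.1 + q.2)) - 1) +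
                (lb * cc) * (q.1 + q.2)^(k+1) / (k+1) := by
            rw [intervalIntegral.integral_add
              ((by fun_prop : Continuous fun w => lb * (lb * Real.exp (lb * w))).intervalIntegrable _ _)
              ((by fun_prop : Continuous fun w : ℝ => (lb * cc) * |w|^k).intervalIntegrable _ _)]
            congr 1
            · rw [intervalIntegral.integral_const_mul, KIE.integral_expc]
            · exact KIE.integral_poly (lb * cc) _ k ht0
          have hE1 : (1:ℝ) ≤ Real.exp (lb * (q.1 + q.2)) := Real.one_le_exp (by positivity)
          have hlbE : lb ≤ lb * Real.exp (lb * (q.1 + q.2)) := by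
            nlinarith
          have hquarter : (1/4) * ((lb * cc) * (q.1 + q.2)^(k+1) / (k+1)) =
              nG * (lb/4)^(k+1) * (q.1 + q.2)^(k+1) / (k+1).factorial := by
            rw [hcc, Nat.factorial_succ]
            have hfpos : (0:ℝ) < k.factorial := by positivity
            push_cast
            field_simp
            ring
          have habs : |G0 q| ≤ |KIE.Ffun lamC q| + (1/4) * |KIE.Iop (KIE.Kk lamC G0) q| := by
            rw [hGq]
            unfold KIE.Phi
            calc |KIE.Ffun lamC q + 1/4 * KIE.Iop (KIE.Kk lamC ⇑G0) q| ≤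
                |KIE.Ffun lamC q| + |1/4 * KIE.Iop (KIE.Kk lamC ⇑G0) q| := abs_add_le _ _
              _ = |KIE.Ffun lamC q| + (1/4) * |KIE.Iop (KIE.Kk lamC ⇑G0) q| := by
                  rw [abs_mul]; norm_num
          rw [hIval] at hI
          linarith
      have hrwk : ∀ k : ℕ, nG * (lb/4)^k * (p.1 + p.2)^k / k.factorial =
          nG * ((lb * (p.1 + p.2)/4)^k / k.factorial) := by
        intro k
        rw [mul_assoc, ← mul_pow]
        have harg : lb/4 * (p.1 + p.2) = lb * (p.1 + p.2)/4 := by ring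
        rw [harg, mul_div_assoc]
      have htendp : Filter.Tendsto (fun k : ℕ => (lb * (p.1 + p.2)/4)^k / k.factorial)
          Filter.atTop (nhds 0) := FloorSemiring.tendsto_pow_div_factorial_atTop _
      have htendF : Filter.Tendsto
          (fun k : ℕ => lb * Real.exp (lb * (p.1 + p.2)) +
            nG * ((lb * (p.1 + p.2)/4)^k / k.factorial))
          Filter.atTop (nhds (lb * Real.exp (lb * (p.1 + p.2)))) := by
        have h1 : Filter.Tendsto (fun _ : ℕ => lb * Real.exp (lb * (p.1 + p.2)))
            Filter.atTop (nhds (lb * Real.exp (lb * (p.1 + p.2)))) := tendsto_const_nhds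
        have h3 := h1.add (htendp.const_mul nG)
        simpa using h3
      apply ge_of_tendsto htendF
      apply Filter.Eventually.of_forall
      intro k
      have := claimB k p hp
      rw [hrwk k] at this
      exact this
    refine ⟨hmain, hmain.trans ?_⟩
    have ht2 : p.1 + p.2 ≤ 2 := hp.2.2
    have : lb * (p.1 + p.2) ≤ 2 * lb := by nlinarith
    exact mul_le_mul_of_nonneg_left (Real.exp_le_exp.2 this) hlb0
  · -- uniqueness
    intro G' hG'c hG'eq
    set g2 : ℝ × ℝ → ℝ := fun r => G' (KIE.rho r) with hg2def
    have hg2c : Continuous g2 := hG'c.comp_continuous KIE.continuous_rho KIE.rho_mem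
    obtain ⟨M, hM⟩ : ∃ M, ∀ r ∈ Dtri, ‖G' r‖ ≤ M :=
      KIE.isCompact_Dtri.exists_bound_of_continuousOn hG'c
    have hg2b : ∀ r : ℝ × ℝ, ‖g2 r‖ ≤ max M 0 :=
      fun r => (hM _ (KIE.rho_mem r)).trans (le_max_left _ _)
    set G2 : BoundedContinuousFunction (ℝ × ℝ) ℝ :=
      BoundedContinuousFunction.ofNormedAddCommGroup g2 hg2c (max M 0) hg2b with hG2def
    have hG2coe : ∀ r, G2 r = G' (KIE.rho r) := fun r => rfl
    have hG2D : ∀ r ∈ Dtri, G2 r = G' r := by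
      intro r hr
      rw [hG2coe, KIE.rho_eq hr]
    have hfix2 : T G2 = G2 := by
      ext r
      rw [hT, hG2coe]
      have hq := KIE.rho_mem r
      set q := KIE.rho r
      rw [KIE.Phi_eq_form hCeq _ hq, hG'eq q hq]
      congr 1
      rw [KIE.double_congr hq hG2D]
    have h1 : Function.IsFixedPt (T^[m]) G0 :=
      (Function.IsFixedPt.iterate (show Function.IsFixedPt T G0 from hfix) m)
    have h2 : Function.IsFixedPt (T^[m]) G2 :=
      (Function.IsFixedPt.iterate (show Function.IsFixedPt T G2 from hfix2) m)
    have hGeq : G0 = G2 := hcontr.fixedPoint_unique' h1 h2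
    intro p hp
    calc G0 p = G2 p := by rw [hGeq]
      _ = G' p := hG2D p hp
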